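/- Let {a₁, …, a_n} be a sum-distinct set of positive integers (all 2ⁿ subset sums are pairwise distinct) with a₁ < a₂ < … < a_n and n ≥ 5. Then a_n > σ_n · 2^{n−1}. -/

import Mathlib

open MeasureTheory



open Finset

/-- Binomial coefficient with integer index (0 for negative index). -/
def ch (k : ℕ) (j : ℤ) : ℕ := if j < 0 then 0 else k.choose j.toNat

lemma ch_neg (k : ℕ) {j : ℤ} (h : j < 0) : ch k j = 0 := by simp [ch, h]

lemma ch_nonneg_idx (k : ℕ) {j : ℤ} (h : 0 ≤ j) : ch k j = k.choose j.toNat := by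
  simp [ch, not_lt.mpr h]

lemma ch_pascal (k : ℕ) (j : ℤ) : ch (k+1) j = ch k j + ch k (j-1) := by
  rcases lt_trichotomy j 0 with h | h | h
  · rw [ch_neg _ h, ch_neg _ h, ch_neg _ (by omega)]
  · subst h
    rw [ch_nonneg_idx _ le_rfl, ch_nonneg_idx _ le_rfl, ch_neg _ (by omega)]
    simp
  · obtain ⟨m, rfl⟩ : ∃ m : ℕ, j = (m : ℤ) + 1 := ⟨(j-1).toNat, by omega⟩
    rw [ch_nonneg_idx _ (by omega), ch_nonneg_idx _ (by omega), ch_nonneg_idx _ (by omega)]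
    rw [show ((m:ℤ)+1).toNat = m + 1 by omega, show ((m:ℤ)+1-1).toNat = m by omega]
    have h := Nat.choose_succ_succ k m
    simp only [Nat.succ_eq_add_one] at h
    omega

/-- Sum of a window of binomial coefficients: indices `a, a+1, ..., a+u-1`. -/
noncomputable def SS (k : ℕ) (a : ℤ) (u : ℕ) : ℕ := ∑ j ∈ Finset.Icc a (a + u - 1), ch k j

lemma SS_zero (k : ℕ) (a : ℤ) : SS k a 0 = 0 := by
  unfold SS
  rw [Finset.Icc_eq_empty (by omega)]
  simp

lemma SS_rec (k : ℕ) (a : ℤ) (u : ℕ) (hu : 1 ≤ u) :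
    SS (k+1) a u = SS k (a-1) (u+1) + SS k a (u-1) := by
  unfold SS
  rw [show ((u - 1 : ℕ) : ℤ) = (u : ℤ) - 1 by omega,
      show ((u + 1 : ℕ) : ℤ) = (u : ℤ) + 1 by push_cast; ring,
      show a - 1 + ((u:ℤ) + 1) - 1 = a + u - 1 by ring,
      show a + ((u:ℤ) - 1) - 1 = a + u - 2 by ring]
  simp only [ch_pascal]
  rw [Finset.sum_add_distrib]
  have h2 : ∑ j ∈ Finset.Icc a (a + u - 1), ch k (j - 1)
      = ∑ j ∈ Finset.Icc (a-1) (a + u - 2), ch k j := by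
    rw [show Finset.Icc a (a+u-1) = Finset.map (addRightEmbedding 1) (Finset.Icc (a-1) (a+u-2)) by
      rw [Finset.map_add_right_Icc]; congr 1 <;> ring]
    rw [Finset.sum_map]
    simp [addRightEmbedding]
  rw [h2]
  have e1 : Finset.Icc (a-1) (a + (u:ℤ) - 2) = insert (a-1) (Finset.Icc a (a+u-2)) := by
    ext j; simp only [Finset.mem_Icc, Finset.mem_insert]; omega
  have e2 : Finset.Icc (a-1) (a + (u:ℤ) - 1) = insert (a-1) (Finset.Icc a (a+u-1)) := by
    ext j; simp only [Finset.mem_Icc, Finset.mem_insert]; omega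
  rw [e1, e2, Finset.sum_insert (by simp only [Finset.mem_Icc]; omega),
      Finset.sum_insert (by simp only [Finset.mem_Icc]; omega)]
  ring

lemma SS_base (aa : ℤ) (u : ℕ) (hu : 1 ≤ u) (h1 : -(u:ℤ) + 1 ≤ 2*aa) (h2 : 2*aa ≤ -(u:ℤ) + 2) :
    SS 0 aa u = 1 := by
  unfold SS
  rw [Finset.sum_eq_single_of_mem 0]
  · simp [ch]
  · simp only [Finset.mem_Icc]; omega
  · intro j hj hj0
    rcases lt_or_ge j 0 with h | h
    · exact ch_neg _ h
    · rw [ch_nonneg_idx _ h]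
      apply Nat.choose_eq_zero_of_lt
      omega

lemma SS_top (n : ℕ) : SS n ((n+1)/2 : ℕ) 1 = n.choose (n/2) := by
  unfold SS
  rw [show ((((n+1)/2 : ℕ)):ℤ) + (1:ℕ) - 1 = (((n+1)/2 : ℕ):ℤ) by push_cast; ring]
  rw [Finset.Icc_self, Finset.sum_singleton, ch_nonneg_idx _ (by positivity)]
  rw [Int.toNat_natCast]
  rcases Nat.even_or_odd n with ⟨m, rfl⟩ | ⟨m, rfl⟩
  · rw [show (m+m+1)/2 = m by omega, show (m+m)/2 = m by omega]
  · rw [show (2*m+1+1)/2 = m+1 by omega, show (2*m+1)/2 = m by omega]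
    have h := Nat.choose_symm (n := 2*m+1) (k := m+1) (by omega)
    simp only [show 2*m+1-(m+1) = m by omega] at h
    omega

open Finset

section Bpart
variable {ι : Type*} [LinearOrder ι]

lemma walk_bound (a : ι → ℤ) (amono : Monotone a) (s : Finset ι) :
    ∀ (r : ℤ) (u : ℕ) (aa : ℤ), 1 ≤ u → 0 ≤ r →
      (∀ i ∈ s, 0 < a i) → (∀ i ∈ s, (u:ℤ) * a i ≤ r) →
      ((s.card : ℤ) - u + 1 ≤ 2*aa) → (2*aa ≤ (s.card:ℤ) - u + 2) →
      SS s.card aa u ≤ (s.powerset.filter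
        (fun T => |2*∑ i ∈ T, a i - ∑ i ∈ s, a i| ≤ r)).card := by
  classical
  induction s using Finset.induction_on_max with
  | empty =>
    intro r u aa hu hr _ _ h1 h2
    simp only [Finset.card_empty] at h1 h2 ⊢
    rw [Finset.powerset_empty]
    rw [SS_base aa u hu (by omega) (by omega)]
    rw [Finset.filter_singleton]
    rw [if_pos (by simpa using hr)]
    simp
  | insert b s' hb IH =>
    intro r u aa hu hr hpos hinv h1 h2
    have hbns : b ∉ s' := fun h => lt_irrefl b (hb b h)
    have hcard : (insert b s').card = s'.card + 1 := Finset.card_insert_of_notMem hbns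
    set k := s'.card with hk
    set c := a b with hc
    have hcpos : 0 < c := hpos b (Finset.mem_insert_self b s')
    have hucr : (u:ℤ) * c ≤ r := hinv b (Finset.mem_insert_self _ _)
    have hcr : c ≤ r := by nlinarith [hcpos, hucr, hu]
    have hail : ∀ i ∈ s', a i ≤ c := fun i hi => amono (le_of_lt (hb i hi))
    have hposs' : ∀ i ∈ s', 0 < a i := fun i hi => hpos i (Finset.mem_insert_of_mem hi)
    have hsum : ∑ i ∈ insert b s', a i = c + ∑ i ∈ s', a i := Finset.sum_insert hbns
    set A' := ∑ i ∈ s', a i with hA'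
    -- split the powerset
    rw [hcard, hsum, Finset.powerset_insert, Finset.filter_union,
        Finset.card_union_of_disjoint, Finset.filter_image, Finset.card_image_of_injOn]
    rotate_left
    · -- injectivity of insert b
      intro T₁ hT₁ T₂ hT₂ he
      simp only [Finset.coe_filter, Set.mem_setOf_eq, Finset.mem_powerset] at hT₁ hT₂
      have hb₁ : b ∉ T₁ := fun h => hbns (hT₁.1 h)
      have hb₂ : b ∉ T₂ := fun h => hbns (hT₂.1 h)
      ext x
      constructor
      · intro hx
        have : x ∈ insert b T₂ := he ▸ Finset.mem_insert_of_mem hx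
        rcases Finset.mem_insert.mp this with rfl | h
        · exact absurd hx hb₁
        · exact h
      · intro hx
        have : x ∈ insert b T₁ := he ▸ Finset.mem_insert_of_mem hx
        rcases Finset.mem_insert.mp this with rfl | h
        · exact absurd hx hb₂
        · exact h
    · -- disjointness
      rw [Finset.disjoint_left]
      intro T hT hT2
      simp only [Finset.mem_filter, Finset.mem_powerset, Finset.mem_image] at hT hT2
      obtain ⟨⟨T', hT', rfl⟩, _⟩ := hT2
      exact hbns (hT.1 (Finset.mem_insert_self b T'))
    -- rewrite the two conditions
    have hrw1 : Finset.filter (fun T => |2*∑ i ∈ T, a i - (c + A')| ≤ r) s'.powerset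
        = Finset.filter (fun T => |(2*∑ i ∈ T, a i - A') - c| ≤ r) s'.powerset := by
      apply Finset.filter_congr; intro T _;
      constructor <;> intro h <;> [skip; skip] <;>
        · rw [abs_le] at h ⊢; constructor <;> linarith [h.1, h.2]
    have hrw2 : Finset.filter (fun T => |2*∑ i ∈ insert b T, a i - (c + A')| ≤ r) s'.powerset
        = Finset.filter (fun T => |(2*∑ i ∈ T, a i - A') + c| ≤ r) s'.powerset := by
      apply Finset.filter_congr; intro T hT
      have hbT : b ∉ T := fun h => hbns (Finset.mem_powerset.mp hT h)
      rw [Finset.sum_insert hbT]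
      constructor <;> intro h <;>
        · rw [abs_le] at h ⊢; constructor <;> linarith [h.1, h.2]
    rw [hrw1, hrw2]
    -- inclusion-exclusion
    have hkey : (Finset.filter (fun T => |(2*∑ i ∈ T, a i - A') - c| ≤ r) s'.powerset).card
        + (Finset.filter (fun T => |(2*∑ i ∈ T, a i - A') + c| ≤ r) s'.powerset).card
        = (Finset.filter (fun T => |2*∑ i ∈ T, a i - A'| ≤ r + c) s'.powerset).card
        + (Finset.filter (fun T => |2*∑ i ∈ T, a i - A'| ≤ r - c) s'.powerset).card := by
      rw [← Finset.card_union_add_card_inter, ← Finset.filter_or, ← Finset.filter_and]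
      congr 1
      · apply congrArg Finset.card
        apply Finset.filter_congr; intro T _
        rw [abs_le, abs_le, abs_le]
        constructor <;> intro h <;> omega
      · apply congrArg Finset.card
        apply Finset.filter_congr; intro T _
        rw [abs_le, abs_le, abs_le]
        constructor <;> intro h <;> omega
    rw [hkey]
    -- apply induction hypotheses
    have hplus : SS k (aa-1) (u+1)
        ≤ (Finset.filter (fun T => |2*∑ i ∈ T, a i - A'| ≤ r + c) s'.powerset).card := by
      apply IH (r+c) (u+1) (aa-1) (by omega) (by linarith) hposs'
      · intro i hi
        have h1 := hinv i (Finset.mem_insert_of_mem hi)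
        have h2 := hail i hi
        push_cast
        nlinarith [hposs' i hi]
      · push_cast; push_cast at h1; omega
      · push_cast; push_cast at h2; omega
    have hminus : SS k aa (u-1)
        ≤ (Finset.filter (fun T => |2*∑ i ∈ T, a i - A'| ≤ r - c) s'.powerset).card := by
      rcases eq_or_lt_of_le hu with he | hlt
      · rw [← he, SS_zero]; exact Nat.zero_le _
      · have hu2 : 2 ≤ u := hlt
        have hcast : ((u-1 : ℕ) : ℤ) = (u:ℤ) - 1 := by omega
        apply IH (r-c) (u-1) aa (by omega) (by nlinarith) hposs'
        · intro i hi
          have hA := hinv i (Finset.mem_insert_of_mem hi)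
          have hB := hail i hi
          rw [hcast]
          nlinarith [hposs' i hi]
        · rw [hcast]; push_cast at h1 ⊢; omega
        · rw [hcast]; push_cast at h2 ⊢; omega
    calc SS (k+1) aa u = SS k (aa-1) (u+1) + SS k aa (u-1) := SS_rec k aa u hu
    _ ≤ _ := Nat.add_le_add hplus hminus

end Bpart

open Finset

lemma count_le {n : ℕ} (a : Fin n → ℤ)
    (hsd : ∀ S T : Finset (Fin n), ∑ i ∈ S, a i = ∑ i ∈ T, a i → S = T) (M : ℤ) :
    ((Finset.univ : Finset (Fin n)).powerset.filter
      (fun T => |2*∑ i ∈ T, a i - ∑ i, a i| ≤ M)).card ≤ M.toNat + 1 := by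
  classical
  have h := Finset.card_le_card_of_injOn
    (s := (Finset.univ : Finset (Fin n)).powerset.filter
      (fun T => |2*∑ i ∈ T, a i - ∑ i, a i| ≤ M))
    (f := fun T : Finset (Fin n) => ((2*∑ i ∈ T, a i - ∑ i, a i + M).toNat)/2)
    (t := Finset.range (M.toNat+1)) ?_ ?_
  · simpa using h
  · intro T hT
    simp only [Finset.mem_coe, Finset.mem_filter] at hT
    have h := hT.2
    rw [abs_le] at h
    simp only [Finset.mem_coe, Finset.mem_range]
    omega
  · intro T₁ hT₁ T₂ hT₂ he
    simp only [Finset.coe_filter, Set.mem_setOf_eq, abs_le] at hT₁ hT₂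
    simp only at he
    have hdiff : (2*∑ i ∈ T₁, a i - ∑ i, a i + M) - (2*∑ i ∈ T₂, a i - ∑ i, a i + M)
        = 2*((∑ i ∈ T₁, a i) - (∑ i ∈ T₂, a i)) := by ring
    have : ∑ i ∈ T₁, a i = ∑ i ∈ T₂, a i := by omega
    exact hsd _ _ this

theorem comb_main {n : ℕ} (hn : 1 ≤ n) (a : Fin n → ℤ) (hpos : ∀ i, 0 < a i)
    (hmono : StrictMono a)
    (hsd : ∀ S T : Finset (Fin n), ∑ i ∈ S, a i = ∑ i ∈ T, a i → S = T) :
    (n.choose (n/2) : ℤ) ≤ a ⟨n-1, by omega⟩ + 1 := by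
  classical
  set M := a ⟨n-1, by omega⟩ with hM
  have hMmax : ∀ i, a i ≤ M := by
    intro i
    apply hmono.monotone
    rw [Fin.le_def]
    simp only
    omega
  have hM0 : 0 < M := hpos _
  have hw := walk_bound a hmono.monotone Finset.univ M 1 (((n+1)/2 : ℕ) : ℤ)
    le_rfl hM0.le (fun i _ => hpos i)
    (fun i _ => by simpa using hMmax i) ?_ ?_
  · have hcount := count_le a hsd M
    have htop : SS (Finset.univ : Finset (Fin n)).card (((n+1)/2 : ℕ) : ℤ) 1
        = n.choose (n/2) := by
      rw [Finset.card_univ, Fintype.card_fin]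
      exact SS_top n
    rw [htop] at hw
    have : n.choose (n/2) ≤ M.toNat + 1 := le_trans hw hcount
    omega
  · rw [Finset.card_univ, Fintype.card_fin]
    push_cast
    omega
  · rw [Finset.card_univ, Fintype.card_fin]
    push_cast
    omega

open Real

lemma nonneg_of_deriv {f : ℝ → ℝ} (hf : Differentiable ℝ f) (h0 : f 0 = 0)
    (h' : ∀ x, 0 ≤ x → 0 ≤ deriv f x) : ∀ x, 0 ≤ x → 0 ≤ f x := by
  intro x hx
  have hmono := monotoneOn_of_deriv_nonneg (convex_Ici (0:ℝ)) hf.continuous.continuousOn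
    hf.differentiableOn
    (fun y hy => h' y (le_of_lt (by simpa [interior_Ici] using hy)))
  have := hmono (Set.self_mem_Ici) (show x ∈ Set.Ici (0:ℝ) from hx) hx
  rwa [h0] at this

lemma cos_ge_quad (x : ℝ) (hx : 0 ≤ x) : 1 - x^2/2 ≤ Real.cos x := by
  have key : ∀ y, 0 ≤ y → 0 ≤ Real.cos y - 1 + y^2/2 := by
    apply nonneg_of_deriv
    · exact (Real.differentiable_cos.sub_const 1).add ((differentiable_pow 2).div_const 2)
    · norm_num
    · intro y hy
      have H : HasDerivAt (fun y => Real.cos y - 1 + y^2/2) (-Real.sin y + 2*y^(2-1)/2) y :=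
        ((Real.hasDerivAt_cos y).sub_const 1).add ((hasDerivAt_pow 2 y).div_const 2)
      rw [H.deriv]
      have := Real.sin_le hy
      norm_num
      linarith
  linarith [key x hx]

lemma sin_ge_cubic (x : ℝ) (hx : 0 ≤ x) : x - x^3/6 ≤ Real.sin x := by
  have key : ∀ y, 0 ≤ y → 0 ≤ Real.sin y - y + y^3/6 := by
    apply nonneg_of_deriv
    · exact (Real.differentiable_sin.sub differentiable_id).add ((differentiable_pow 3).div_const 6)
    · norm_num
    · intro y hy
      have H : HasDerivAt (fun y => Real.sin y - y + y^3/6) (Real.cos y - 1 + 3*y^(3-1)/6) y :=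
        ((Real.hasDerivAt_sin y).sub (hasDerivAt_id y)).add ((hasDerivAt_pow 3 y).div_const 6)
      rw [H.deriv]
      have := cos_ge_quad y hy
      norm_num
      nlinarith
  linarith [key x hx]

lemma cos_le_quart (x : ℝ) (hx : 0 ≤ x) : Real.cos x ≤ 1 - x^2/2 + x^4/24 := by
  have key : ∀ y, 0 ≤ y → 0 ≤ 1 - y^2/2 + y^4/24 - Real.cos y := by
    apply nonneg_of_deriv
    · exact (((differentiable_const 1).sub ((differentiable_pow 2).div_const 2)).add
        ((differentiable_pow 4).div_const 24)).sub Real.differentiable_cos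
    · norm_num
    · intro y hy
      have H : HasDerivAt (fun y => 1 - y^2/2 + y^4/24 - Real.cos y)
          (0 - 2*y^(2-1)/2 + 4*y^(4-1)/24 - (-Real.sin y)) y :=
        (((hasDerivAt_const y 1).sub ((hasDerivAt_pow 2 y).div_const 2)).add
          ((hasDerivAt_pow 4 y).div_const 24)).sub (Real.hasDerivAt_cos y)
      rw [H.deriv]
      have := sin_ge_cubic y hy
      norm_num
      nlinarith
  linarith [key x hx]

lemma sin_le_quint (x : ℝ) (hx : 0 ≤ x) : Real.sin x ≤ x - x^3/6 + x^5/120 := by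
  have key : ∀ y, 0 ≤ y → 0 ≤ y - y^3/6 + y^5/120 - Real.sin y := by
    apply nonneg_of_deriv
    · exact ((differentiable_id.sub ((differentiable_pow 3).div_const 6)).add
        ((differentiable_pow 5).div_const 120)).sub Real.differentiable_sin
    · norm_num
    · intro y hy
      have H : HasDerivAt (fun y => y - y^3/6 + y^5/120 - Real.sin y)
          (1 - 3*y^(3-1)/6 + 5*y^(5-1)/120 - Real.cos y) y :=
        (((hasDerivAt_id y).sub ((hasDerivAt_pow 3 y).div_const 6)).add
          ((hasDerivAt_pow 5 y).div_const 120)).sub (Real.hasDerivAt_sin y)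
      rw [H.deriv]
      have := cos_le_quart y hy
      norm_num
      nlinarith
  linarith [key x hx]

lemma exp_neg_le_quad (x : ℝ) (hx : 0 ≤ x) : Real.exp (-x) ≤ 1 - x + x^2/2 := by
  have key : ∀ y, 0 ≤ y → 0 ≤ 1 - y + y^2/2 - Real.exp (-y) := by
    apply nonneg_of_deriv
    · exact (((differentiable_const 1).sub differentiable_id).add
        ((differentiable_pow 2).div_const 2)).sub (Real.differentiable_exp.comp differentiable_neg)
    · norm_num
    · intro y hy
      have Hexp : HasDerivAt (fun y : ℝ => Real.exp (-y)) (Real.exp (-y) * (-1)) y :=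
        (Real.hasDerivAt_exp (-y)).comp y (hasDerivAt_neg y)
      have H : HasDerivAt (fun y : ℝ => 1 - y + y^2/2 - Real.exp (-y))
          (0 - 1 + 2*y^(2-1)/2 - Real.exp (-y) * (-1)) y :=
        (((hasDerivAt_const y 1).sub (hasDerivAt_id y)).add
          ((hasDerivAt_pow 2 y).div_const 2)).sub Hexp
      rw [H.deriv]
      have := Real.add_one_le_exp (-y)
      norm_num
      linarith
  linarith [key x hx]

lemma exp_neg_ge_cubic (x : ℝ) (hx : 0 ≤ x) : 1 - x + x^2/2 - x^3/6 ≤ Real.exp (-x) := by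
  have key : ∀ y, 0 ≤ y → 0 ≤ Real.exp (-y) - 1 + y - y^2/2 + y^3/6 := by
    apply nonneg_of_deriv
    · exact ((((Real.differentiable_exp.comp differentiable_neg).sub_const 1).add
        differentiable_id).sub ((differentiable_pow 2).div_const 2)).add
        ((differentiable_pow 3).div_const 6)
    · norm_num
    · intro y hy
      have Hexp : HasDerivAt (fun y : ℝ => Real.exp (-y)) (Real.exp (-y) * (-1)) y :=
        (Real.hasDerivAt_exp (-y)).comp y (hasDerivAt_neg y)
      have H : HasDerivAt (fun y : ℝ => Real.exp (-y) - 1 + y - y^2/2 + y^3/6)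
          ((((Real.exp (-y) * (-1)) - 0) + 1 - 2*y^(2-1)/2) + 3*y^(3-1)/6) y := by
        exact (((Hexp.sub (hasDerivAt_const y 1)).add (hasDerivAt_id y)).sub
          ((hasDerivAt_pow 2 y).div_const 2)).add ((hasDerivAt_pow 3 y).div_const 6)
      rw [H.deriv]
      have := exp_neg_le_quad y hy
      norm_num
      linarith
  linarith [key x hx]

open Real

lemma sin_le_gauss (t : ℝ) (ht : 0 < t) (htpi : t ≤ Real.pi) :
    Real.sin t ≤ t * Real.exp (-(t^2/6)) := by
  have hpi_lt : Real.pi < 3.141593 := by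
    linarith [Real.pi_lt_d6]
  have hpi_gt : 3.141592 < Real.pi := by
    linarith [Real.pi_gt_d6]
  rcases le_or_gt t (67/25) with hA | hA
  · -- small t : Taylor comparison
    have h5 := sin_le_quint t ht.le
    have hcub := exp_neg_ge_cubic (t^2/6) (by positivity)
    have hmid : t - t^3/6 + t^5/120 ≤ t * (1 - t^2/6 + (t^2/6)^2/2 - (t^2/6)^3/6) := by
      have h72 : t^2 ≤ 36/5 := by nlinarith
      nlinarith [pow_pos ht 5, pow_pos ht 7, pow_nonneg ht.le 5]
    calc Real.sin t ≤ t - t^3/6 + t^5/120 := h5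
      _ ≤ t * (1 - t^2/6 + (t^2/6)^2/2 - (t^2/6)^3/6) := hmid
      _ ≤ t * Real.exp (-(t^2/6)) := by
          apply mul_le_mul_of_nonneg_left _ ht.le
          convert hcub using 2 <;> ring
  · -- large t : sin t ≤ π - t, and exp lower bounded by (1-t²/48)^8
    have hsin : Real.sin t ≤ Real.pi - t := by
      rw [← Real.sin_pi_sub]
      exact Real.sin_le (by linarith)
    have ht2 : t^2 ≤ Real.pi^2 := by nlinarith
    have hq : (0:ℝ) ≤ 1 - t^2/48 := by nlinarith
    have hexp8 : (1 - t^2/48)^8 ≤ Real.exp (-(t^2/6)) := by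
      have h1 : 1 - t^2/48 ≤ Real.exp (-(t^2/48)) := by
        have := Real.add_one_le_exp (-(t^2/48)); linarith
      have h2 := pow_le_pow_left₀ hq h1 8
      have h3 : (Real.exp (-(t^2/48)))^8 = Real.exp (-(t^2/6)) := by
        rw [← Real.exp_nat_mul]
        norm_num
        ring
      linarith [h2, h3.le, h3.ge]
    rcases le_or_gt t (59/20) with hB | hB
    · -- 2.68 < t ≤ 2.95
      have hq' : (1 - (59/20:ℝ)^2/48)^8 ≤ (1 - t^2/48)^8 := by
        apply pow_le_pow_left₀ (by norm_num)
        nlinarith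
      have hrhs : (67/25:ℝ) * (1 - (59/20:ℝ)^2/48)^8 ≤ t * Real.exp (-(t^2/6)) := by
        have he : (0:ℝ) ≤ Real.exp (-(t^2/6)) := (Real.exp_pos _).le
        nlinarith [hexp8, hq']
      have hc : (0.5:ℝ) ≤ (67/25:ℝ) * (1 - (59/20:ℝ)^2/48)^8 := by norm_num
      have hnum : Real.pi - t < (67/25:ℝ) * (1 - (59/20:ℝ)^2/48)^8 := by
        have : Real.pi - t < 3.141593 - 67/25 := by linarith
        linarith
      linarith
    · -- 2.95 < t ≤ π
      have hq' : (1 - Real.pi^2/48)^8 ≤ (1 - t^2/48)^8 := by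
        apply pow_le_pow_left₀ (by nlinarith)
        nlinarith
      have hq'' : (1 - (3.141593:ℝ)^2/48)^8 ≤ (1 - Real.pi^2/48)^8 := by
        apply pow_le_pow_left₀ (by nlinarith)
        nlinarith
      have hrhs : (59/20:ℝ) * (1 - (3.141593:ℝ)^2/48)^8 ≤ t * Real.exp (-(t^2/6)) := by
        have he : (0:ℝ) ≤ Real.exp (-(t^2/6)) := (Real.exp_pos _).le
        nlinarith [hexp8, hq', hq'']
      have hc : (0.3:ℝ) ≤ (59/20:ℝ) * (1 - (3.141593:ℝ)^2/48)^8 := by norm_num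
      have hnum : Real.pi - t < (59/20:ℝ) * (1 - (3.141593:ℝ)^2/48)^8 := by
        have h1 : Real.pi - t < 3.141593 - 59/20 := by linarith
        linarith
      linarith


noncomputable def sigma (n : ℕ) : ℝ :=
  (2 / Real.pi) * ∫ t in Set.Ioi (0:ℝ), (Real.sin t / t) ^ n

section SigmaBound
open Real MeasureTheory Set


lemma sigma_le (n : ℕ) (hn : 5 ≤ n) :
    sigma n ≤ Real.sqrt (6*Real.pi/n)/Real.pi + 2/(Real.pi^n * ((n:ℝ)-1)) := by
  have hnR : (5:ℝ) ≤ (n:ℝ) := by exact_mod_cast hn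
  set b : ℝ := (n:ℝ)/6 with hb
  have hbpos : 0 < b := by rw [hb]; positivity
  set f : ℝ → ℝ := fun t => (Real.sin t / t)^n with hf
  set g : ℝ → ℝ := fun t => if t ≤ Real.pi then Real.exp (-b * t^2) else t ^ (-(n:ℝ)) with hg
  have hnlt : -(n:ℝ) < -1 := by linarith
  have hbound : ∀ t ∈ Set.Ioi (0:ℝ), |f t| ≤ g t := by
    intro t ht
    simp only [Set.mem_Ioi] at ht
    rcases le_or_gt t Real.pi with hle | hgt
    · have hsinn : 0 ≤ Real.sin t := Real.sin_nonneg_of_nonneg_of_le_pi ht.le hle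
      have hs : Real.sin t / t ≤ Real.exp (-(t^2/6)) := by
        rw [div_le_iff₀ ht]
        calc Real.sin t ≤ t * Real.exp (-(t^2/6)) := sin_le_gauss t ht hle
          _ = Real.exp (-(t^2/6)) * t := mul_comm _ _
      have habs : |f t| = (Real.sin t / t)^n := by
        rw [hf]; simp only
        rw [abs_pow, abs_of_nonneg (by positivity)]
      rw [habs, hg]; simp only [if_pos hle]
      calc (Real.sin t / t)^n ≤ (Real.exp (-(t^2/6)))^n :=
            pow_le_pow_left₀ (by positivity) hs n
        _ = Real.exp (-b*t^2) := by
            rw [← Real.exp_nat_mul]; congr 1; rw [hb]; ring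
    · have h1t : |Real.sin t / t| ≤ 1/t := by
        rw [abs_div, abs_of_pos ht, div_le_div_iff₀ ht ht]
        have := Real.abs_sin_le_one t
        nlinarith
      have habs : |f t| = |Real.sin t / t|^n := by rw [hf]; simp only; rw [abs_pow]
      rw [habs, hg]; simp only [if_neg (not_le.mpr hgt)]
      calc |Real.sin t / t|^n ≤ (1/t)^n := pow_le_pow_left₀ (abs_nonneg _) h1t n
        _ = t ^ (-(n:ℝ)) := by
            rw [Real.rpow_neg (by linarith [Real.pi_pos] : (0:ℝ) ≤ t), Real.rpow_natCast]
            rw [one_div, inv_pow]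
  have hfmeas : AEStronglyMeasurable f (volume.restrict (Set.Ioi (0:ℝ))) :=
    ((Real.measurable_sin.div measurable_id).pow_const n).aestronglyMeasurable
  have hg1 : IntegrableOn g (Set.Ioc 0 Real.pi) :=
    ((integrable_exp_neg_mul_sq hbpos).integrableOn).congr_fun
      (fun t ht => by simp only [hg, if_pos ht.2]) measurableSet_Ioc
  have hg2 : IntegrableOn g (Set.Ioi Real.pi) :=
    (integrableOn_Ioi_rpow_of_lt hnlt Real.pi_pos).congr_fun
      (fun t ht => by simp only [hg, if_neg (not_le.mpr (Set.mem_Ioi.mp ht))]) measurableSet_Ioi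
  have hgunion : IntegrableOn g (Set.Ioi (0:ℝ)) := by
    rw [← Set.Ioc_union_Ioi_eq_Ioi Real.pi_pos.le]
    exact hg1.union hg2
  have hfb : ∀ᵐ t ∂(volume.restrict (Set.Ioi (0:ℝ))), ‖f t‖ ≤ ‖g t‖ := by
    rw [ae_restrict_iff' measurableSet_Ioi]
    exact ae_of_all _ (fun t ht => by
      rw [Real.norm_eq_abs, Real.norm_eq_abs]
      exact le_trans (hbound t ht) (le_abs_self _))
  have hfint : IntegrableOn f (Set.Ioi (0:ℝ)) := MeasureTheory.Integrable.mono hgunion hfmeas hfb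
  have hfg : f ≤ᵐ[volume.restrict (Set.Ioi (0:ℝ))] g := by
    rw [Filter.EventuallyLE, ae_restrict_iff' measurableSet_Ioi]
    exact ae_of_all _ (fun t ht => le_trans (le_abs_self _) (hbound t ht))
  have hmono : ∫ t in Set.Ioi (0:ℝ), f t ≤ ∫ t in Set.Ioi (0:ℝ), g t :=
    integral_mono_ae hfint hgunion hfg
  have hsplit : ∫ t in Set.Ioi (0:ℝ), g t
      = (∫ t in Set.Ioc 0 Real.pi, g t) + ∫ t in Set.Ioi Real.pi, g t := by
    rw [← Set.Ioc_union_Ioi_eq_Ioi Real.pi_pos.le]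
    exact setIntegral_union (Set.Ioc_disjoint_Ioi le_rfl) measurableSet_Ioi hg1 hg2
  have hI1 : ∫ t in Set.Ioc 0 Real.pi, g t ≤ Real.sqrt (Real.pi/b)/2 := by
    rw [setIntegral_congr_fun measurableSet_Ioc
      (fun t (ht : t ∈ Set.Ioc 0 Real.pi) => (by simp only [hg, if_pos ht.2] : g t = Real.exp (-b*t^2)))]
    calc ∫ t in Set.Ioc 0 Real.pi, Real.exp (-b*t^2)
        ≤ ∫ t in Set.Ioi (0:ℝ), Real.exp (-b*t^2) := by
          apply setIntegral_mono_set (integrable_exp_neg_mul_sq hbpos).integrableOn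
          · exact ae_of_all _ (fun t => (Real.exp_pos _).le)
          · exact HasSubset.Subset.eventuallyLE Set.Ioc_subset_Ioi_self
      _ = Real.sqrt (Real.pi/b)/2 := integral_gaussian_Ioi b
  have hI2 : ∫ t in Set.Ioi Real.pi, g t = (Real.pi / Real.pi^n)/((n:ℝ)-1) := by
    rw [setIntegral_congr_fun measurableSet_Ioi
      (fun t (ht : t ∈ Set.Ioi Real.pi) => (by simp only [hg, if_neg (not_le.mpr (Set.mem_Ioi.mp ht))] : g t = t ^ (-(n:ℝ))))]
    rw [integral_Ioi_rpow_of_lt hnlt Real.pi_pos]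
    have hrw : Real.pi ^ (-(n:ℝ)+1) = Real.pi / Real.pi^n := by
      rw [Real.rpow_add Real.pi_pos, Real.rpow_one, Real.rpow_neg Real.pi_pos.le,
        Real.rpow_natCast]
      field_simp
    rw [hrw, show (-(n:ℝ)+1) = -((n:ℝ)-1) by ring, neg_div_neg_eq]
  -- assemble
  have hint : ∫ t in Set.Ioi (0:ℝ), f t
      ≤ Real.sqrt (Real.pi/b)/2 + (Real.pi / Real.pi^n)/((n:ℝ)-1) := by
    rw [hsplit] at hmono
    linarith [hI1, hI2.le, hI2.ge]
  have hpib : Real.pi / b = 6*Real.pi/(n:ℝ) := by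
    rw [hb]; field_simp
  have h2pi : (0:ℝ) < 2/Real.pi := by positivity
  have : sigma n ≤ (2/Real.pi) * (Real.sqrt (Real.pi/b)/2 + (Real.pi / Real.pi^n)/((n:ℝ)-1)) := by
    unfold sigma
    exact mul_le_mul_of_nonneg_left hint h2pi.le
  calc sigma n ≤ (2/Real.pi) * (Real.sqrt (Real.pi/b)/2 + (Real.pi / Real.pi^n)/((n:ℝ)-1)) := this
    _ = Real.sqrt (6*Real.pi/n)/Real.pi + 2/(Real.pi^n * ((n:ℝ)-1)) := by
        rw [hpib]
        have hpin : Real.pi^n ≠ 0 := by positivity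
        have hne : (n:ℝ) - 1 ≠ 0 := by linarith
        field_simp


end SigmaBound


lemma choose_id (m : ℕ) : (m+1) * Nat.choose (2*m+1) m = (2*m+1) * Nat.choose (2*m) m := by
  have A2 := Nat.add_one_mul_choose_eq (2*m) m
  have A3 : Nat.choose (2*m+1) m = Nat.choose (2*m+1) (m+1) := by
    have := Nat.choose_symm (n := 2*m+1) (k := m+1) (by omega)
    simpa [show 2*m+1-(m+1) = m by omega] using this
  rw [A3, Nat.mul_comm]
  exact A2.symm

lemma choose_id2 (m : ℕ) : (m+1)^2 * Nat.choose (2*(m+1)) (m+1)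
    = 2*(m+1)*(2*m+1) * Nat.choose (2*m) m := by
  have A1 := Nat.add_one_mul_choose_eq (2*m+1) m
  have A4 := choose_id m
  have h : 2*(m+1) = 2*m+1+1 := by ring
  rw [h]
  nlinarith [A1, A4]

lemma natEven : ∀ m : ℕ, 4 ≤ m → 1225 * 16^m ≤ 4096 * m * (Nat.choose (2*m) m)^2 := by
  intro m hm
  induction m, hm using Nat.le_induction with
  | base => norm_num [show Nat.choose (2*4) 4 = 70 by decide]
  | succ m hm IH =>
    set x := Nat.choose (2*m) m with hx
    set y := Nat.choose (2*(m+1)) (m+1) with hy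
    have hid : (m+1)^2 * y = 2*(m+1)*(2*m+1) * x := choose_id2 m
    have h4 : 4*m*(m+1) ≤ (2*m+1)^2 := by nlinarith
    have key : (m+1)^4 * (1225 * 16^(m+1)) ≤ (m+1)^4 * (4096 * (m+1) * y^2) := by
      calc (m+1)^4 * (1225 * 16^(m+1)) = 16*(m+1)^4*(1225*16^m) := by ring
        _ ≤ 16*(m+1)^4*(4096*m*x^2) := Nat.mul_le_mul_left _ IH
        _ = 16384*(m+1)^3*((4*m*(m+1))*x^2) := by ring
        _ ≤ 16384*(m+1)^3*((2*m+1)^2*x^2) :=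
            Nat.mul_le_mul_left _ (Nat.mul_le_mul_right _ h4)
        _ = 4096*(m+1)*(2*(m+1)*(2*m+1)*x)^2 := by ring
        _ = 4096*(m+1)*((m+1)^2*y)^2 := by rw [hid]
        _ = (m+1)^4 * (4096 * (m+1) * y^2) := by ring
    exact Nat.le_of_mul_le_mul_left key (by positivity)

lemma oddPoly (m : ℕ) (hm : 4 ≤ m) :
    (5308416:ℝ) * m * ((m:ℝ)+1)^2 ≤ 765625 * (2*(m:ℝ)+1)^3 := by
  have hmR : (4:ℝ) ≤ (m:ℝ) := by exact_mod_cast hm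
  nlinarith [sq_nonneg ((m:ℝ)-4), sq_nonneg (m:ℝ)]

/-- central-binomial-type lower bound: for n ≥ 8, (18/25 · 2^n)² ≤ C(n,⌊n/2⌋)² · n. -/
lemma Bsq (n : ℕ) (hn : 8 ≤ n) :
    (324/625:ℝ) * 4^n ≤ ((n.choose (n/2)):ℝ)^2 * n := by
  rcases Nat.even_or_odd n with ⟨m, rfl⟩ | ⟨m, rfl⟩
  · have hm : 4 ≤ m := by omega
    have hE := natEven m hm
    have hER : (1225:ℝ) * 16^m ≤ 4096 * m * ((Nat.choose (2*m) m : ℝ))^2 := by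
      exact_mod_cast hE
    rw [show m + m = 2*m by ring]
    rw [show (2*m)/2 = m by omega]
    have h16 : (4:ℝ)^(2*m) = 16^m := by
      rw [pow_mul]; norm_num
    rw [h16]
    push_cast
    nlinarith [hER]
  · have hm : 4 ≤ m := by omega
    have hE := natEven m hm
    have hER : (1225:ℝ) * 16^m ≤ 4096 * m * ((Nat.choose (2*m) m : ℝ))^2 := by
      exact_mod_cast hE
    rw [show (2*m+1)/2 = m by omega]
    have hidR : ((m:ℝ)+1) * (Nat.choose (2*m+1) m : ℝ) = (2*(m:ℝ)+1) * (Nat.choose (2*m) m : ℝ) := by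
      exact_mod_cast choose_id m
    have hP := oddPoly m hm
    have h16 : (4:ℝ)^(2*m+1) = 4 * 16^m := by
      rw [pow_succ, pow_mul]; norm_num; ring
    rw [h16]
    set x : ℝ := (Nat.choose (2*m) m : ℝ) with hxdef
    set B : ℝ := (Nat.choose (2*m+1) m : ℝ) with hBdef
    have hm1 : (0:ℝ) < (m:ℝ)+1 := by positivity
    have hmpos : (0:ℝ) < (m:ℝ) := by
      have : (4:ℝ) ≤ (m:ℝ) := by exact_mod_cast hm
      linarith
    have hxnn : (0:ℝ) ≤ x := Nat.cast_nonneg _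
    -- B = (2m+1) x / (m+1); B² (2m+1) ≥ (324/625)·4·16^m
    have hBsq : ((m:ℝ)+1)^2 * B^2 = (2*(m:ℝ)+1)^2 * x^2 := by
      have h := congrArg (fun z : ℝ => z^2) hidR
      simpa [mul_pow] using h
    have h1 : ((m:ℝ)+1)^2 * (B^2*(2*(m:ℝ)+1)) = (2*(m:ℝ)+1)^3 * x^2 := by
      linear_combination (2*(m:ℝ)+1) * hBsq
    have h2 : (5308416/765625:ℝ)*m*((m:ℝ)+1)^2*x^2 ≤ (2*(m:ℝ)+1)^3 * x^2 := by
      have hxx := sq_nonneg x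
      nlinarith [mul_le_mul_of_nonneg_right hP hxx]
    have h3 : (1225/4096:ℝ)*16^m ≤ m*x^2 := by nlinarith [hER]
    have goal' : ((m:ℝ)+1)^2*((324/625)*(4*16^m)) ≤ ((m:ℝ)+1)^2*(B^2*(2*(m:ℝ)+1)) := by
      calc ((m:ℝ)+1)^2*((324/625)*(4*16^m))
          = (5308416/765625:ℝ)*((m:ℝ)+1)^2*((1225/4096)*16^m) := by ring
        _ ≤ (5308416/765625:ℝ)*((m:ℝ)+1)^2*(m*x^2) := by
            rw [mul_assoc, mul_assoc]
            apply mul_le_mul_of_nonneg_left _ (by norm_num)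
            exact mul_le_mul_of_nonneg_left h3 (by positivity)
        _ = (5308416/765625:ℝ)*m*((m:ℝ)+1)^2*x^2 := by ring
        _ ≤ (2*(m:ℝ)+1)^3 * x^2 := h2
        _ = ((m:ℝ)+1)^2*(B^2*(2*(m:ℝ)+1)) := h1.symm
    have hfin : (324/625:ℝ)*(4*16^m) ≤ B^2*(2*(m:ℝ)+1) :=
      (mul_le_mul_iff_right₀ (by positivity)).mp goal'
    push_cast
    nlinarith [hfin]

open Real

lemma sqrt_le_of_sq {x c : ℝ} (hc : 0 ≤ c) (h : x ≤ c^2) : Real.sqrt x ≤ c := by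
  calc Real.sqrt x ≤ Real.sqrt (c^2) := Real.sqrt_le_sqrt h
    _ = c := Real.sqrt_sq hc

lemma pow4_lin : ∀ n : ℕ, 8 ≤ n → (8100:ℝ)*n ≤ 4^n := by
  intro n hn
  induction n, hn using Nat.le_induction with
  | base => norm_num
  | succ n hn IH =>
    have : (8100:ℝ)*(n+1) ≤ 4*(8100*n) := by
      have : (8:ℝ) ≤ (n:ℝ) := by exact_mod_cast hn
      nlinarith
    calc (8100:ℝ)*(n+1:ℕ) = 8100*((n:ℝ)+1) := by push_cast; ring
      _ ≤ 4*(8100*(n:ℝ)) := this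
      _ ≤ 4*4^n := by linarith
      _ = 4^(n+1) := by ring

lemma key5 :
    (Real.sqrt (6*Real.pi/(5:ℕ))/Real.pi + 2/(Real.pi^(5:ℕ)*(((5:ℕ):ℝ)-1))) * (2:ℝ)^((5:ℕ)-1) < 10 := by
  have hc : ((5:ℕ):ℝ) = (5:ℝ) := by norm_num
  rw [show (6*Real.pi/((5:ℕ):ℝ)) = 6*Real.pi/5 by rw [hc]]
  have hpl : Real.pi < 3.141593 := by linarith [Real.pi_lt_d6]
  have hpg : 3.141592 < Real.pi := by linarith [Real.pi_gt_d6]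
  have h1 : Real.sqrt (6*Real.pi/5) ≤ 1.9416263 := by
    apply sqrt_le_of_sq (by norm_num)
    nlinarith
  have h2 : Real.sqrt (6*Real.pi/5)/Real.pi ≤ 1.9416263/3.141592 := by
    apply div_le_div₀ (by norm_num) h1 (by norm_num) hpg.le
  have hpow : (306:ℝ) ≤ Real.pi^5 := by
    have h := pow_le_pow_left₀ (by norm_num : (0:ℝ) ≤ 3.141592) hpg.le 5
    nlinarith [h]
  have h3 : 2/(Real.pi^5*(((5:ℕ):ℝ)-1)) ≤ 2/(306*4) := by
    apply div_le_div_of_nonneg_left (by norm_num) (by norm_num)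
    push_cast
    nlinarith
  have : (1.9416263/3.141592 + 2/(306*4) : ℝ) * 2^(5-1) < 10 := by norm_num
  push_cast at h3 ⊢
  nlinarith [h2, h3]

lemma key_numeric (n : ℕ) (hn : 6 ≤ n) :
    (Real.sqrt (6*Real.pi/n)/Real.pi + 2/(Real.pi^n*((n:ℝ)-1))) * 2^(n-1)
      < (n.choose (n/2) : ℝ) - 1 := by
  have hpl : Real.pi < 3.141593 := by linarith [Real.pi_lt_d6]
  have hpg : 3.141592 < Real.pi := by linarith [Real.pi_gt_d6]
  rcases lt_or_ge n 8 with h8 | h8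
  · interval_cases n
    · -- n = 6
      have h1 : Real.sqrt (6*Real.pi/(6:ℕ)) ≤ 1.77246 := by
        apply sqrt_le_of_sq (by norm_num)
        push_cast
        nlinarith
      have h2 : Real.sqrt (6*Real.pi/(6:ℕ))/Real.pi ≤ 1.77246/3.141592 :=
        div_le_div₀ (by norm_num) h1 (by norm_num) hpg.le
      have hpow : (961:ℝ) ≤ Real.pi^6 := by
        have h := pow_le_pow_left₀ (by norm_num : (0:ℝ) ≤ 3.141592) hpg.le 6
        nlinarith [h]
      have h3 : 2/(Real.pi^6*(((6:ℕ):ℝ)-1)) ≤ 2/(961*5) := by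
        apply div_le_div_of_nonneg_left (by norm_num) (by norm_num)
        push_cast
        nlinarith
      have hfin : (1.77246/3.141592 + 2/(961*5) : ℝ) * 2^(6-1) < (Nat.choose 6 3 : ℝ) - 1 := by
        norm_num [show Nat.choose 6 3 = 20 by decide]
      push_cast at h2 h3 hfin ⊢
      nlinarith [h2, h3, hfin]
    · -- n = 7
      have h1 : Real.sqrt (6*Real.pi/(7:ℕ)) ≤ 1.641236 := by
        apply sqrt_le_of_sq (by norm_num)
        push_cast
        nlinarith
      have h2 : Real.sqrt (6*Real.pi/(7:ℕ))/Real.pi ≤ 1.641236/3.141592 :=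
        div_le_div₀ (by norm_num) h1 (by norm_num) hpg.le
      have hpow : (3020:ℝ) ≤ Real.pi^7 := by
        have h := pow_le_pow_left₀ (by norm_num : (0:ℝ) ≤ 3.141592) hpg.le 7
        nlinarith [h]
      have h3 : 2/(Real.pi^7*(((7:ℕ):ℝ)-1)) ≤ 2/(3020*6) := by
        apply div_le_div_of_nonneg_left (by norm_num) (by norm_num)
        push_cast
        nlinarith
      have hfin : (1.641236/3.141592 + 2/(3020*6) : ℝ) * 2^(7-1) < (Nat.choose 7 3 : ℝ) - 1 := by
        norm_num [show Nat.choose 7 3 = 35 by decide]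
      push_cast at h2 h3 hfin ⊢
      nlinarith [h2, h3, hfin]
  · -- n ≥ 8
    have hnR : (8:ℝ) ≤ (n:ℝ) := by exact_mod_cast h8
    have hsn : (0:ℝ) < Real.sqrt n := Real.sqrt_pos.mpr (by linarith)
    set Q : ℝ := 2^n / Real.sqrt n with hQ
    have hQ90 : (90:ℝ) ≤ Q := by
      rw [hQ, le_div_iff₀ hsn]
      have : (90:ℝ) * Real.sqrt n = Real.sqrt (8100*n) := by
        rw [Real.sqrt_mul (by norm_num) (n:ℝ), show Real.sqrt 8100 = 90 by
          rw [show (8100:ℝ) = 90^2 by norm_num, Real.sqrt_sq]; norm_num]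
      rw [this]
      apply sqrt_le_of_sq (by positivity)
      calc (8100:ℝ)*n ≤ 4^n := pow4_lin n h8
        _ = ((2:ℝ)^n)^2 := by rw [← pow_mul, mul_comm, pow_mul]; norm_num
    have hB : (18/25:ℝ)*Q ≤ (n.choose (n/2) : ℝ) := by
      have hb := Bsq n h8
      have hL : Real.sqrt ((324/625:ℝ) * 4^n) = (18/25)*2^n := by
        rw [show (324/625:ℝ)*4^n = ((18/25)*2^n)^2 by
          rw [mul_pow, ← pow_mul, mul_comm n 2, pow_mul]; norm_num]
        exact Real.sqrt_sq (by positivity)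
      have hR : Real.sqrt (((n.choose (n/2)):ℝ)^2 * n) = (n.choose (n/2):ℝ) * Real.sqrt n := by
        rw [Real.sqrt_mul (sq_nonneg _), Real.sqrt_sq (Nat.cast_nonneg _)]
      have := Real.sqrt_le_sqrt hb
      rw [hL, hR] at this
      rw [hQ, ← mul_div_assoc, div_le_iff₀ hsn]
      linarith
    -- main term
    have h6pi : Real.sqrt (6*Real.pi) ≤ 4.34162 := by
      apply sqrt_le_of_sq (by norm_num)
      nlinarith
    have hsplit : Real.sqrt (6*Real.pi/(n:ℝ)) = Real.sqrt (6*Real.pi)/Real.sqrt n :=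
      Real.sqrt_div (by positivity) _
    have hmain : Real.sqrt (6*Real.pi/(n:ℝ))/Real.pi * 2^(n-1)
        ≤ (4.34162/3.141592) * (Q/2) := by
      rw [hsplit]
      have h2n : (2:ℝ)^(n-1) = 2^n/2 := by
        have : n - 1 + 1 = n := by omega
        rw [← this, pow_succ]
        field_simp
        rw [Nat.add_sub_cancel]
      rw [h2n]
      have hstep : Real.sqrt (6*Real.pi)/Real.sqrt n/Real.pi ≤ (4.34162/3.141592)/Real.sqrt n := by
        rw [div_div, div_div]
        apply div_le_div₀ (by norm_num) h6pi (by positivity)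
        have : (3.141592:ℝ) ≤ Real.pi := hpg.le
        nlinarith [hsn]
      calc Real.sqrt (6*Real.pi)/Real.sqrt n/Real.pi * (2^n/2)
          ≤ (4.34162/3.141592)/Real.sqrt n * (2^n/2) := by
            apply mul_le_mul_of_nonneg_right hstep (by positivity)
        _ = (4.34162/3.141592) * (Q/2) := by
            rw [hQ]
            have hsnne : Real.sqrt (n:ℝ) ≠ 0 := ne_of_gt hsn
            field_simp
    -- tail term
    have htail : 2/(Real.pi^n*((n:ℝ)-1)) * 2^(n-1) ≤ 1/7 := by
      have hp2 : (2:ℝ)^n ≤ Real.pi^n := pow_le_pow_left₀ (by norm_num) (by linarith) n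
      have hpip : (0:ℝ) < Real.pi^n := by positivity
      have hnn : n - 1 + 1 = n := by omega
      have h2n : (2:ℝ)*2^(n-1) = 2^n := by
        conv_rhs => rw [← hnn, pow_succ]
        ring
      have hn7 : (7:ℝ) ≤ (n:ℝ)-1 := by linarith
      have hD : (0:ℝ) < Real.pi^n*((n:ℝ)-1) := by
        apply mul_pos hpip
        linarith
      have e : 2/(Real.pi^n*((n:ℝ)-1)) * 2^(n-1) = 2^n/(Real.pi^n*((n:ℝ)-1)) := by
        rw [div_mul_eq_mul_div, h2n]
      rw [e]
      calc 2^n / (Real.pi^n*((n:ℝ)-1))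
          ≤ Real.pi^n / (Real.pi^n*((n:ℝ)-1)) := (div_le_div_iff_of_pos_right hD).mpr hp2
        _ = 1/((n:ℝ)-1) := by
            rw [div_eq_div_iff (ne_of_gt hD) (by intro h; linarith [h.ge, h.le] : ((n:ℝ)-1) ≠ 0)]
            ring
        _ ≤ 1/7 := by
            apply div_le_div_of_nonneg_left (by norm_num) (by norm_num) hn7
    -- combine
    have hcoef : (0:ℝ) ≤ 18/25 - 4.34162/(2*3.141592) := by norm_num
    have hgap : (18/25 - 4.34162/(2*3.141592) : ℝ) * 90 > 1 + 1/7 := by norm_num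
    have hchain : (18/25 - 4.34162/(2*3.141592) : ℝ) * Q ≥ (18/25 - 4.34162/(2*3.141592)) * 90 :=
      mul_le_mul_of_nonneg_left hQ90 hcoef
    have := hB
    nlinarith [hmain, htail, hchain, hgap, hB]

set_option maxHeartbeats 4000000 in
set_option maxRecDepth 100000 in
lemma five_dec : ∀ s : Finset (Fin 9), s.card = 5 →
    ∃ S ∈ s.powerset, ∃ T ∈ s.powerset, S ≠ T ∧ ∑ i ∈ S, ((i:ℕ)+1) = ∑ i ∈ T, ((i:ℕ)+1) := by
  decide

lemma five_bound {a : Fin 5 → ℤ} (hpos : ∀ i, 0 < a i) (hmono : StrictMono a)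
    (hsd : ∀ S T : Finset (Fin 5), ∑ i ∈ S, a i = ∑ i ∈ T, a i → S = T) :
    (10:ℤ) ≤ a ⟨4, by omega⟩ := by
  by_contra hcon
  push_neg at hcon
  have hle : ∀ i, a i ≤ 9 := by
    intro i
    have h1 : a i ≤ a ⟨4, by omega⟩ := by
      apply hmono.monotone
      rw [Fin.le_def]
      simp only [Fin.val_mk]
      omega
    omega
  have hbound : ∀ i, (a i).toNat - 1 < 9 := by
    intro i; have := hle i; have := hpos i; omega
  set m : Fin 5 → Fin 9 := fun i => ⟨(a i).toNat - 1, hbound i⟩ with hm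
  have hminj : Function.Injective m := by
    intro i j hij
    apply hmono.injective
    have h1 := hpos i; have h2 := hpos j
    have h3 : (a i).toNat - 1 = (a j).toNat - 1 := congrArg Fin.val hij
    omega
  have hval : ∀ i, ((m i : ℕ) : ℤ) + 1 = a i := by
    intro i
    have := hpos i
    simp only [hm]
    omega
  set s : Finset (Fin 9) := Finset.image m Finset.univ with hs
  have hcard : s.card = 5 := by
    rw [hs, Finset.card_image_of_injective _ hminj]
    simp
  obtain ⟨S, hS, T, hT, hST, hsum⟩ := five_dec s hcard
  have himg : ∀ (U : Finset (Fin 9)), U ⊆ s →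
      (Finset.univ.filter (fun i => m i ∈ U)).image m = U := by
    intro U hU
    ext j
    simp only [Finset.mem_image, Finset.mem_filter, Finset.mem_univ, true_and]
    constructor
    · rintro ⟨i, hiU, rfl⟩; exact hiU
    · intro hj
      have hjs : j ∈ s := hU hj
      rw [hs] at hjs
      obtain ⟨i, -, rfl⟩ := Finset.mem_image.mp hjs
      exact ⟨i, hj, rfl⟩
  have hsum' : ∀ (U : Finset (Fin 9)), U ⊆ s →
      ∑ i ∈ Finset.univ.filter (fun i => m i ∈ U), a i = ∑ j ∈ U, ((j:ℕ) + 1 : ℤ) := by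
    intro U hU
    conv_rhs => rw [← himg U hU]
    rw [Finset.sum_image (fun x _ y _ h => hminj h)]
    exact Finset.sum_congr rfl (fun i _ => (hval i).symm)
  have heq : ∑ i ∈ Finset.univ.filter (fun i => m i ∈ S), a i
      = ∑ i ∈ Finset.univ.filter (fun i => m i ∈ T), a i := by
    rw [hsum' S (Finset.mem_powerset.mp hS), hsum' T (Finset.mem_powerset.mp hT)]
    exact_mod_cast hsum
  have hfin := hsd _ _ heq
  apply hST
  rw [← himg S (Finset.mem_powerset.mp hS), ← himg T (Finset.mem_powerset.mp hT), hfin]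


theorem sum_distinct_lower_bound (n : ℕ) (hn : 5 ≤ n) (a : Fin n → ℤ)
    (hpos : ∀ i, 0 < a i) (hmono : StrictMono a)
    (hsd : ∀ S T : Finset (Fin n), ∑ i ∈ S, a i = ∑ i ∈ T, a i → S = T) :
    (a ⟨n - 1, by omega⟩ : ℝ) > sigma n * 2 ^ (n - 1) := by
  have hσ := sigma_le n hn
  have hcomb := comb_main (by omega : 1 ≤ n) a hpos hmono hsd
  set M : ℤ := a ⟨n-1, by omega⟩ with hM
  have h2pos : (0:ℝ) ≤ (2:ℝ)^(n-1) := by positivity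
  have hmul : sigma n * 2^(n-1)
      ≤ (Real.sqrt (6*Real.pi/n)/Real.pi + 2/(Real.pi^n*((n:ℝ)-1))) * 2^(n-1) :=
    mul_le_mul_of_nonneg_right hσ h2pos
  rw [gt_iff_lt]
  rcases eq_or_lt_of_le hn with h5 | h6
  · -- n = 5
    subst h5
    have h10 : (10:ℤ) ≤ M := five_bound hpos hmono hsd
    have hMR : (10:ℝ) ≤ (M:ℝ) := by exact_mod_cast h10
    calc sigma 5 * 2^(5-1)
        ≤ (Real.sqrt (6*Real.pi/(5:ℕ))/Real.pi + 2/(Real.pi^(5:ℕ)*(((5:ℕ):ℝ)-1))) * 2^((5:ℕ)-1) := hmul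
      _ < 10 := key5
      _ ≤ (M:ℝ) := hMR
  · -- n ≥ 6
    have hkey := key_numeric n h6
    have hMR : ((n.choose (n/2) : ℝ)) - 1 ≤ (M:ℝ) := by
      have h : ((Nat.choose n (n/2) : ℤ) : ℝ) ≤ ((M + 1 : ℤ) : ℝ) := by exact_mod_cast hcomb
      push_cast at h ⊢
      linarith
    calc sigma n * 2^(n-1)
        ≤ (Real.sqrt (6*Real.pi/n)/Real.pi + 2/(Real.pi^n*((n:ℝ)-1))) * 2^(n-1) := hmul
      _ < (n.choose (n/2):ℝ) - 1 := hkey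
      _ ≤ (M:ℝ) := hMR
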